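/- Let M be an n×n normal matrix with eigenvalues λ₁ ≥ ... ≥ λₙ (real spectrum, e.g. Hermitian). Then λ₁ - λₙ ≤ (2‖M‖_F² - (2/n)(tr M)²)^{1/2}, where ‖M‖_F is the Frobenius norm. -/

import Mathlib

open Matrix BigOperators

private lemma mirsky_scalar {n : ℕ} (hn : 0 < n) (μ : Fin n → ℝ) (a b : Fin n) (hab : a ≠ b) :
    (μ a - μ b) ^ 2 ≤ 2 * ∑ i, μ i ^ 2 - (2 / n) * (∑ i, μ i) ^ 2 := by
  have hn' : (0:ℝ) < n := Nat.cast_pos.2 hn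
  set c : ℝ := (μ a + μ b) / 2 with hc
  set ν : Fin n → ℝ := fun i => μ i - c with hν
  have h1 : ∑ i, ν i ^ 2 = ∑ i, μ i ^ 2 - 2 * c * ∑ i, μ i + n * c ^ 2 := by
    have : ∀ i : Fin n, ν i ^ 2 = μ i ^ 2 - 2 * c * μ i + c ^ 2 := by
      intro i; simp only [hν]; ring
    rw [Finset.sum_congr rfl fun i _ => this i, Finset.sum_add_distrib,
      Finset.sum_sub_distrib, Finset.sum_const, ← Finset.mul_sum]
    simp [Finset.card_univ, nsmul_eq_mul]
  have h2 : ∑ i, ν i = ∑ i, μ i - n * c := by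
    simp [hν, Finset.sum_sub_distrib, Finset.card_univ, nsmul_eq_mul]
  have hshift : 2 * ∑ i, ν i ^ 2 - (2 / n) * (∑ i, ν i) ^ 2
      = 2 * ∑ i, μ i ^ 2 - (2 / n) * (∑ i, μ i) ^ 2 := by
    rw [h1, h2]; field_simp; ring
  rw [← hshift]
  -- split off a and b
  set s : Finset (Fin n) := Finset.univ \ {a, b} with hs
  have hsplit : ∀ f : Fin n → ℝ, ∑ i, f i = f a + f b + ∑ i ∈ s, f i := by
    intro f
    rw [← Finset.sum_sdiff (Finset.subset_univ ({a, b} : Finset (Fin n))),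
      Finset.sum_pair hab]
    ring
  rw [hsplit (fun i => ν i ^ 2), hsplit ν]
  set S : ℝ := ∑ i ∈ s, ν i
  set Q : ℝ := ∑ i ∈ s, ν i ^ 2
  have hQ : 0 ≤ Q := Finset.sum_nonneg fun i _ => sq_nonneg _
  have hcs : S ^ 2 ≤ (s.card : ℝ) * Q := by
    exact_mod_cast sq_sum_le_card_mul_sum_sq (s := s) (f := ν)
  have hcard : (s.card : ℝ) ≤ n := by
    have := Finset.card_le_univ s
    simpa [Finset.card_univ] using (Nat.cast_le.2 this : (s.card : ℝ) ≤ _)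
  have hab0 : ν a + ν b = 0 := by simp only [hν, hc]; ring
  have hdiff : μ a - μ b = ν a - ν b := by simp only [hν]; ring
  have hSQ : (2 / (n:ℝ)) * S ^ 2 ≤ 2 * Q := by
    rw [div_mul_eq_mul_div, div_le_iff₀ hn']
    nlinarith [hcs, hcard, hQ]
  rw [hdiff]
  have h0 : (ν a + ν b + S) ^ 2 = S ^ 2 := by rw [hab0]; ring
  rw [h0]
  nlinarith [hSQ, hab0, sq_nonneg (ν a - ν b)]

/-- **Mirsky's spread bound.** For an `n × n` Hermitian matrix `M` (a normal matrix with real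
spectrum), the spread `λ₁ - λₙ` is at most `(2‖M‖_F² - (2/n)(tr M)²)^{1/2}`. -/
theorem spread_le_mirsky {n : ℕ} (hn : 0 < n) (M : Matrix (Fin n) (Fin n) ℂ)
    (hM : M.IsHermitian) :
    (⨆ i, hM.eigenvalues i) - (⨅ i, hM.eigenvalues i) ≤
      Real.sqrt (2 * ∑ i, ∑ j, ‖M i j‖ ^ 2 - (2 / n) * (M.trace.re) ^ 2) := by
  haveI : Nonempty (Fin n) := Fin.pos_iff_nonempty.mp hn
  set μ := hM.eigenvalues with hμ
  set U : Matrix (Fin n) (Fin n) ℂ := (hM.eigenvectorUnitary : Matrix (Fin n) (Fin n) ℂ) with hU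
  set D : Matrix (Fin n) (Fin n) ℂ := diagonal (Complex.ofReal ∘ μ) with hD
  have hUU : star U * U = 1 :=
    (Matrix.mem_unitaryGroup_iff').mp hM.eigenvectorUnitary.2
  have hspec : M = U * D * star U := hM.spectral_theorem
  -- trace identity
  have htrace : M.trace.re = ∑ i, μ i := by
    have h : M.trace = ∑ i, (μ i : ℂ) := by
      conv_lhs => rw [hspec]
      rw [Matrix.trace_mul_cycle, hUU, Matrix.one_mul, hD, Matrix.trace_diagonal]
      simp
    rw [h]
    simp [Complex.ofReal_re]
  -- Frobenius identity
  have hfrob : ∑ i, ∑ j, ‖M i j‖ ^ 2 = ∑ i, μ i ^ 2 := by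
    have hMM : M * M = U * (D * D) * star U := by
      conv_lhs => rw [hspec]
      simp only [Matrix.mul_assoc]
      rw [← Matrix.mul_assoc (star U) U (D * star U), hUU, Matrix.one_mul]
    have h1 : (Mᴴ * M).trace = ∑ i, (μ i : ℂ) ^ 2 := by
      rw [hM.eq, hMM, Matrix.trace_mul_cycle, hUU, Matrix.one_mul, hD,
        Matrix.diagonal_mul_diagonal, Matrix.trace_diagonal]
      simp [sq]
    have h2 : (Mᴴ * M).trace = ∑ j, ∑ i, (‖M i j‖ ^ 2 : ℂ) := by
      simp only [Matrix.trace, Matrix.diag, Matrix.mul_apply, Matrix.conjTranspose_apply]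
      congr 1; ext j; congr 1; ext i
      rw [show star (M i j) = (starRingEnd ℂ) (M i j) from rfl,
        ← Complex.normSq_eq_conj_mul_self, Complex.normSq_eq_norm_sq]
      push_cast; ring
    have := h1.symm.trans h2
    have hre := congrArg Complex.re this
    push_cast at hre
    rw [Finset.sum_comm] at hre
    exact_mod_cast hre.symm
  -- argmax and argmin
  obtain ⟨a, ha⟩ := Finite.exists_max μ
  obtain ⟨b, hb⟩ := Finite.exists_min μ
  have hsup : (⨆ i, μ i) ≤ μ a := ciSup_le ha
  have hinf : μ b ≤ ⨅ i, μ i := le_ciInf hb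
  have key : μ a - μ b ≤ Real.sqrt (2 * ∑ i, ∑ j, ‖M i j‖ ^ 2 - (2 / n) * (M.trace.re) ^ 2) := by
    rcases eq_or_ne a b with h | h
    · rw [h, sub_self]; exact Real.sqrt_nonneg _
    · have hkey : (μ a - μ b) ^ 2 ≤ 2 * ∑ i, ∑ j, ‖M i j‖ ^ 2 - (2 / n) * (M.trace.re) ^ 2 := by
        rw [hfrob, htrace]
        exact mirsky_scalar hn μ a b h
      exact (Real.le_sqrt (sub_nonneg.2 (hb a)) (le_trans (sq_nonneg _) hkey)).2 hkey
  linarith
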